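/- Let θ > 0, z > 0, and c ∈ ℝ. For every x ∈ (0,1)^N, writing U = 1/(Σ_{i=1}^N x_i), f_i(x) = β b_i(x)(1 − x_i) − δ x_i, and g_i(x) = σ_i(x_i) b_i(x)(1 − x_i), one has: −θ z U^{θ+1} Σ_{i=1}^N f_i(x) + (θ(θ+1)/2) z U^{θ+2} Σ_{i=1}^N g_i(x)² + c·U^{θ} ≤ U^{θ−1}·( −( z θ (β d_min − δ − (M²/32) λ1² (1+θ)) − c )·U + z θ β λ1 ). -/

import Mathlib

private lemma sum_mul_sum_ortho {N : ℕ} (b : Fin N → Fin N → ℝ)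
    (hb : ∀ i j, (∑ k, b i k * b j k) = if i = j then (1:ℝ) else 0)
    (p q : Fin N → ℝ) :
    (∑ k, (∑ i, p i * b i k) * (∑ j, q j * b j k)) = ∑ i, p i * q i := by
  have h1 : ∀ k, (∑ i, p i * b i k) * (∑ j, q j * b j k)
      = ∑ i, ∑ j, (p i * q j) * (b i k * b j k) := by
    intro k
    rw [Finset.sum_mul_sum]
    exact Finset.sum_congr rfl fun i _ => Finset.sum_congr rfl fun j _ => by ring
  simp_rw [h1]
  rw [Finset.sum_comm]
  refine Finset.sum_congr rfl fun i _ => ?_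
  rw [Finset.sum_comm]
  have h2 : ∀ j, (∑ k, (p i * q j) * (b i k * b j k)) = (p i * q j) * (if i = j then (1:ℝ) else 0) := by
    intro j; rw [← Finset.mul_sum, hb]
  simp_rw [h2]
  simp [Finset.sum_ite_eq, mul_ite, mul_one, mul_zero]

private lemma rayleigh_bounds {N : ℕ} (A : Matrix (Fin N) (Fin N) ℝ) (hA_symm : A.IsSymm)
    (hA_nonneg : ∀ i j, 0 ≤ A i j) (lam1 : ℝ)
    (hlam1_max : ∀ (μ : ℝ) (v : Fin N → ℝ), v ≠ 0 → A.mulVec v = μ • v → μ ≤ lam1) :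
    (∀ v : Fin N → ℝ, (∑ k, v k * ∑ l, A k l * v l) ≤ lam1 * ∑ k, v k * v k) ∧
      (∀ v : Fin N → ℝ, (∑ k, (∑ l, A k l * v l) * (∑ l, A k l * v l)) ≤ lam1 ^ 2 * ∑ k, v k * v k) := by
  have hH : A.IsHermitian := hA_symm
  set b := hH.eigenvectorBasis with hbdef
  set μ := hH.eigenvalues with hμdef
  have horth : ∀ i j, (∑ k, b i k * b j k) = if i = j then (1:ℝ) else 0 := by
    intro i j
    have h := (orthonormal_iff_ite.mp b.orthonormal) i j
    simpa [PiLp.inner_apply, mul_comm] using h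
  have hmul : ∀ j k, (∑ l, A k l * b j l) = μ j * b j k := by
    intro j k
    have h := congrFun (hH.mulVec_eigenvectorBasis j) k
    simpa [Matrix.mulVec, dotProduct] using h
  have hmu_le : ∀ j, μ j ≤ lam1 := by
    intro j
    refine hlam1_max (μ j) (fun k => b j k) ?_ ?_
    · intro h0
      have h11 := horth j j
      rw [if_pos rfl] at h11
      have hzk : ∀ k, b j k = 0 := fun k => congrFun h0 k
      simp [hzk] at h11
    · funext k
      simp only [Matrix.mulVec, dotProduct, Pi.smul_apply, smul_eq_mul]
      exact hmul j k
  -- expansion of any vector in the eigenbasis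
  have hexp : ∀ v : Fin N → ℝ, ∀ k, v k = ∑ i, (∑ l, b i l * v l) * b i k := by
    intro v k
    have hsr := b.sum_repr (WithLp.toLp 2 v)
    have h1 := congrArg (fun w => (EuclideanSpace.proj k (𝕜 := ℝ)) w) hsr
    simp only [map_sum, map_smul, smul_eq_mul, PiLp.proj_apply, PiLp.smul_apply, WithLp.ofLp_toLp] at h1
    have h2 : ∀ i, b.repr (WithLp.toLp 2 v) i = ∑ l, b i l * v l := by
      intro i
      rw [b.repr_apply_apply]
      simp [PiLp.inner_apply, mul_comm]
    rw [← h1]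
    exact Finset.sum_congr rfl fun i _ => by rw [h2]
  have hAv : ∀ v : Fin N → ℝ, ∀ k, (∑ l, A k l * v l) = ∑ i, (μ i * (∑ l, b i l * v l)) * b i k := by
    intro v k
    calc (∑ l, A k l * v l) = ∑ l, A k l * ∑ i, (∑ m, b i m * v m) * b i l :=
          Finset.sum_congr rfl fun l _ => by rw [← hexp v l]
      _ = ∑ l, ∑ i, (∑ m, b i m * v m) * (A k l * b i l) := by
          refine Finset.sum_congr rfl fun l _ => ?_
          rw [Finset.mul_sum]
          exact Finset.sum_congr rfl fun i _ => by ring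
      _ = ∑ i, ∑ l, (∑ m, b i m * v m) * (A k l * b i l) := Finset.sum_comm
      _ = ∑ i, (μ i * (∑ m, b i m * v m)) * b i k := by
          refine Finset.sum_congr rfl fun i _ => ?_
          rw [← Finset.mul_sum, hmul i k]
          ring
  have upper : ∀ v : Fin N → ℝ, (∑ k, v k * ∑ l, A k l * v l) ≤ lam1 * ∑ k, v k * v k := by
    intro v
    have e1 : (∑ k, v k * ∑ l, A k l * v l)
        = ∑ i, (∑ l, b i l * v l) * (μ i * (∑ l, b i l * v l)) := by
      rw [show (∑ k, v k * ∑ l, A k l * v l)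
          = ∑ k, (∑ i, (∑ l, b i l * v l) * b i k) * (∑ j, (μ j * (∑ l, b j l * v l)) * b j k) from
        Finset.sum_congr rfl fun k _ => by rw [← hexp v k, ← hAv v k]]
      exact sum_mul_sum_ortho (fun i k => b i k) horth _ _
    have e2 : (∑ k, v k * v k) = ∑ i, (∑ l, b i l * v l) * (∑ l, b i l * v l) := by
      rw [show (∑ k, v k * v k)
          = ∑ k, (∑ i, (∑ l, b i l * v l) * b i k) * (∑ j, (∑ l, b j l * v l) * b j k) from
        Finset.sum_congr rfl fun k _ => by rw [← hexp v k]]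
      exact sum_mul_sum_ortho (fun i k => b i k) horth _ _
    rw [e1, e2, Finset.mul_sum]
    refine Finset.sum_le_sum fun i _ => ?_
    have h := hmu_le i
    nlinarith [mul_self_nonneg (∑ l, b i l * v l)]
  have hmu_ge : ∀ j, -lam1 ≤ μ j := by
    intro j
    have hu1 : (∑ k, b j k * b j k) = 1 := by simpa using horth j j
    have hQ : (∑ k, b j k * ∑ l, A k l * b j l) = μ j := by
      have h1 : ∀ k, b j k * (∑ l, A k l * b j l) = μ j * (b j k * b j k) := by
        intro k; rw [hmul j k]; ring
      rw [Finset.sum_congr rfl fun k _ => h1 k, ← Finset.mul_sum, hu1, mul_one]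
    have hup := upper (fun k => |b j k|)
    have hww : (∑ k, |b j k| * |b j k|) = 1 := by
      rw [← hu1]
      exact Finset.sum_congr rfl fun k _ => by rw [abs_mul_abs_self]
    rw [hww, mul_one] at hup
    have hcomp : -(∑ k, |b j k| * ∑ l, A k l * |b j l|) ≤ ∑ k, b j k * ∑ l, A k l * b j l := by
      have expand : ∀ y : Fin N → ℝ, (∑ k, y k * ∑ l, A k l * y l) = ∑ k, ∑ l, A k l * (y k * y l) := by
        intro y
        refine Finset.sum_congr rfl fun k _ => ?_
        rw [Finset.mul_sum]
        exact Finset.sum_congr rfl fun l _ => by ring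
      rw [expand, expand, ← Finset.sum_neg_distrib]
      refine Finset.sum_le_sum fun k _ => ?_
      rw [← Finset.sum_neg_distrib]
      refine Finset.sum_le_sum fun l _ => ?_
      have h0 := hA_nonneg k l
      have h1 : A k l * (-(|b j k * b j l|)) ≤ A k l * (b j k * b j l) :=
        mul_le_mul_of_nonneg_left (neg_abs_le _) h0
      have h2 : |b j k| * |b j l| = |b j k * b j l| := (abs_mul _ _).symm
      nlinarith [h1, h2]
    rw [hQ] at hcomp
    linarith
  have lower2 : ∀ v : Fin N → ℝ,
      (∑ k, (∑ l, A k l * v l) * (∑ l, A k l * v l)) ≤ lam1 ^ 2 * ∑ k, v k * v k := by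
    intro v
    have e3 : (∑ k, (∑ l, A k l * v l) * (∑ l, A k l * v l))
        = ∑ i, (μ i * (∑ l, b i l * v l)) * (μ i * (∑ l, b i l * v l)) := by
      rw [show (∑ k, (∑ l, A k l * v l) * (∑ l, A k l * v l))
          = ∑ k, (∑ i, (μ i * (∑ l, b i l * v l)) * b i k) * (∑ j, (μ j * (∑ l, b j l * v l)) * b j k) from
        Finset.sum_congr rfl fun k _ => by rw [← hAv v k]]
      exact sum_mul_sum_ortho (fun i k => b i k) horth _ _
    have e2 : (∑ k, v k * v k) = ∑ i, (∑ l, b i l * v l) * (∑ l, b i l * v l) := by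
      rw [show (∑ k, v k * v k)
          = ∑ k, (∑ i, (∑ l, b i l * v l) * b i k) * (∑ j, (∑ l, b j l * v l) * b j k) from
        Finset.sum_congr rfl fun k _ => by rw [← hexp v k]]
      exact sum_mul_sum_ortho (fun i k => b i k) horth _ _
    rw [e3, e2, Finset.mul_sum]
    refine Finset.sum_le_sum fun i _ => ?_
    have h1 := hmu_le i
    have h2 := hmu_ge i
    have h3 : (μ i) ^ 2 ≤ lam1 ^ 2 := sq_le_sq' h2 h1
    nlinarith [mul_self_nonneg (∑ l, b i l * v l)]
  exact ⟨upper, lower2⟩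

private lemma gterm_bound (M s t bi : ℝ) (habs : |s| ≤ M * t) (ht0 : 0 < t) (ht1 : t < 1) :
    (s * bi * (1 - t)) ^ 2 ≤ M ^ 2 / 16 * (bi * bi) := by
  have hs2 : s ^ 2 ≤ (M * t) ^ 2 := by
    calc s ^ 2 = |s| ^ 2 := (sq_abs s).symm
      _ ≤ (M * t) ^ 2 := by
          apply pow_le_pow_left₀ (abs_nonneg s) habs
  have h1 : t * (1 - t) ≤ 1 / 4 := by nlinarith [sq_nonneg (t - 1 / 2)]
  have h2 : 0 ≤ t * (1 - t) := mul_nonneg ht0.le (by linarith)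
  have h3 : (t * (1 - t)) ^ 2 ≤ 1 / 16 := by nlinarith
  have hM2 : 0 ≤ M * t := (abs_nonneg s).trans habs
  have h5 : s ^ 2 * (1 - t) ^ 2 ≤ M ^ 2 * (t * (1 - t)) ^ 2 := by
    calc s ^ 2 * (1 - t) ^ 2 ≤ (M * t) ^ 2 * (1 - t) ^ 2 :=
          mul_le_mul_of_nonneg_right hs2 (sq_nonneg _)
      _ = M ^ 2 * (t * (1 - t)) ^ 2 := by ring
  have h6 : s ^ 2 * (1 - t) ^ 2 ≤ M ^ 2 / 16 := by
    have := mul_le_mul_of_nonneg_left h3 (sq_nonneg M)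
    linarith
  calc (s * bi * (1 - t)) ^ 2 = (s ^ 2 * (1 - t) ^ 2) * (bi * bi) := by ring
    _ ≤ M ^ 2 / 16 * (bi * bi) :=
        mul_le_mul_of_nonneg_right h6 (mul_self_nonneg bi)

set_option maxHeartbeats 1000000 in
theorem generator_Utheta_estimate
    (N : ℕ) (hN : 1 ≤ N)
    (A : Matrix (Fin N) (Fin N) ℝ)
    (hA_symm : A.IsSymm)
    (hA_01 : ∀ i j, A i j = 0 ∨ A i j = 1)
    (hA_diag : ∀ i, A i i = 0)
    (lam1 : ℝ)
    (hlam1_eig : ∃ v : Fin N → ℝ, v ≠ 0 ∧ A.mulVec v = lam1 • v)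
    (hlam1_max : ∀ (μ : ℝ) (v : Fin N → ℝ), v ≠ 0 → A.mulVec v = μ • v → μ ≤ lam1)
    (dmin : ℝ)
    (hdmin_le : ∀ i, dmin ≤ ∑ j, A i j)
    (hdmin_mem : ∃ i, dmin = ∑ j, A i j)
    (β δ : ℝ) (hβ : 0 ≤ β) (hδ : 0 ≤ δ)
    (M : ℝ) (hM : 0 ≤ M)
    (σ : Fin N → ℝ → ℝ)
    (hσ : ∀ i, ∀ v ∈ Set.Ioo (0 : ℝ) 1, |σ i v| ≤ M * v)
    (θ z c : ℝ) (hθ : 0 < θ) (hz : 0 < z)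
    (x : Fin N → ℝ) (hx : ∀ i, x i ∈ Set.Ioo (0 : ℝ) 1)
    (U : ℝ) (hU : U = 1 / ∑ i, x i)
    (f g : Fin N → ℝ)
    (hf : ∀ i, f i = β * (∑ j, A i j * x j) * (1 - x i) - δ * x i)
    (hg : ∀ i, g i = σ i (x i) * (∑ j, A i j * x j) * (1 - x i)) :
    -θ * z * U ^ (θ + 1) * (∑ i, f i)
        + (θ * (θ + 1) / 2) * z * U ^ (θ + 2) * (∑ i, (g i) ^ 2)
        + c * U ^ θ
      ≤ U ^ (θ - 1) *
          (-(z * θ * (β * dmin - δ - M ^ 2 / 32 * lam1 ^ 2 * (1 + θ)) - c) * U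
            + z * θ * β * lam1) := by
  have hA_nonneg : ∀ i j, 0 ≤ A i j := by
    intro i j; rcases hA_01 i j with h | h <;> simp [h]
  obtain ⟨upper, lower2⟩ := rayleigh_bounds A hA_symm hA_nonneg lam1 hlam1_max
  set S : ℝ := ∑ i, x i with hSdef
  have hS : 0 < S :=
    Finset.sum_pos (fun i _ => (hx i).1) ⟨⟨0, hN⟩, Finset.mem_univ _⟩
  have hUpos : 0 < U := by rw [hU]; positivity
  have hUS : U * S = 1 := by rw [hU]; field_simp
  -- basic quantities
  set P : ℝ := ∑ i, ∑ j, A i j * x j with hPdef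
  set Q : ℝ := ∑ i, x i * ∑ j, A i j * x j with hQdef
  set X2 : ℝ := ∑ i, x i * x i with hX2def
  set B2 : ℝ := ∑ i, (∑ l, A i l * x l) * (∑ l, A i l * x l) with hB2def
  have hX2pos : 0 < X2 :=
    Finset.sum_pos (fun i _ => mul_pos (hx i).1 (hx i).1) ⟨⟨0, hN⟩, Finset.mem_univ _⟩
  have hxleS : ∀ i, x i ≤ S :=
    fun i => Finset.single_le_sum (fun j _ => (hx j).1.le) (Finset.mem_univ i)
  have hX2S : X2 ≤ S * S := by
    rw [hX2def, show S * S = ∑ i, x i * S from by rw [← Finset.sum_mul]]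
    exact Finset.sum_le_sum fun i _ => mul_le_mul_of_nonneg_left (hxleS i) (hx i).1.le
  have hbnonneg : ∀ i, 0 ≤ ∑ j, A i j * x j := fun i =>
    Finset.sum_nonneg fun j _ => mul_nonneg (hA_nonneg i j) (hx j).1.le
  have hQnonneg : 0 ≤ Q :=
    Finset.sum_nonneg fun i _ => mul_nonneg (hx i).1.le (hbnonneg i)
  have hQle : Q ≤ lam1 * X2 := upper x
  have hlam1_nonneg : 0 ≤ lam1 := by
    by_contra h
    push_neg at h
    have h2 : lam1 * X2 < 0 := mul_neg_of_neg_of_pos h hX2pos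
    linarith
  have hQ_ub : Q ≤ lam1 * (S * S) :=
    hQle.trans (mul_le_mul_of_nonneg_left hX2S hlam1_nonneg)
  have hB2_ub : B2 ≤ lam1 ^ 2 * (S * S) :=
    (lower2 x).trans (mul_le_mul_of_nonneg_left hX2S (sq_nonneg lam1))
  -- minimum degree bound
  have hsym : ∀ i j, A i j = A j i := fun i j => (hA_symm.apply i j).symm
  have hP_lb : dmin * S ≤ P := by
    have hPswap : P = ∑ j, (∑ i, A i j) * x j := by
      rw [hPdef, Finset.sum_comm]
      exact Finset.sum_congr rfl fun j _ => (Finset.sum_mul _ _ _).symm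
    have hrow : ∀ j, dmin ≤ ∑ i, A i j := by
      intro j
      calc dmin ≤ ∑ i, A j i := hdmin_le j
        _ = ∑ i, A i j := Finset.sum_congr rfl fun i _ => hsym j i
    rw [hPswap, show dmin * S = ∑ j, dmin * x j from Finset.mul_sum _ _ _]
    exact Finset.sum_le_sum fun j _ => mul_le_mul_of_nonneg_right (hrow j) (hx j).1.le
  -- sum of f
  set F : ℝ := ∑ i, f i with hFdef
  set G : ℝ := ∑ i, (g i) ^ 2 with hGdef
  have hFsplit : F = β * P - β * Q - δ * S := by
    calc F = ∑ i, (β * (∑ j, A i j * x j) - β * (x i * ∑ j, A i j * x j) - δ * x i) :=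
          Finset.sum_congr rfl fun i _ => by rw [hf i]; ring
      _ = β * P - β * Q - δ * S := by
          rw [Finset.sum_sub_distrib, Finset.sum_sub_distrib, ← Finset.mul_sum, ← Finset.mul_sum,
            ← Finset.mul_sum]
  have hF_lb : β * dmin * S - β * lam1 * (S * S) - δ * S ≤ F := by
    have h1 : β * (dmin * S) ≤ β * P := mul_le_mul_of_nonneg_left hP_lb hβ
    have h2 : β * Q ≤ β * (lam1 * (S * S)) := mul_le_mul_of_nonneg_left hQ_ub hβ
    rw [hFsplit]; linarith
  -- sum of g squared
  have hG_ub1 : G ≤ M ^ 2 / 16 * B2 := by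
    rw [hGdef, hB2def, Finset.mul_sum]
    refine Finset.sum_le_sum fun i _ => ?_
    rw [hg i]
    exact gterm_bound M (σ i (x i)) (x i) (∑ j, A i j * x j) (hσ i (x i) (hx i)) (hx i).1 (hx i).2
  have hG_ub : G ≤ M ^ 2 / 16 * (lam1 ^ 2 * (S * S)) := by
    have := mul_le_mul_of_nonneg_left hB2_ub (by positivity : (0:ℝ) ≤ M ^ 2 / 16)
    linarith
  -- rpow algebra
  have e1 : U ^ (θ + 1) = U ^ θ * U := by
    rw [Real.rpow_add hUpos, Real.rpow_one]
  have e2 : U ^ (θ + 2) = U ^ θ * (U * U) := by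
    rw [Real.rpow_add hUpos]
    congr 1
    rw [show (2:ℝ) = (1:ℝ) + 1 by norm_num, Real.rpow_add hUpos, Real.rpow_one]
  have e3 : U ^ (θ - 1) = U ^ θ * S := by
    rw [show θ - 1 = θ + (-1) by ring, Real.rpow_add hUpos, Real.rpow_neg_one]
    have hinv : U⁻¹ = S := by rw [hU]; field_simp
    rw [hinv]
  rw [e1, e2, e3]
  set T : ℝ := U ^ θ with hTdef
  have hT : 0 < T := Real.rpow_pos_of_pos hUpos θ
  -- key inequality (after dividing by T)
  have hterm1 : -θ * z * U * F ≤ θ * z * δ + θ * z * β * lam1 * S - θ * z * β * dmin := by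
    have hneg : -(θ * z * U) ≤ 0 := by
      have : 0 ≤ θ * z * U := by positivity
      linarith
    have h1 : -(θ * z * U) * F ≤ -(θ * z * U) * (β * dmin * S - β * lam1 * (S * S) - δ * S) :=
      mul_le_mul_of_nonpos_left hF_lb hneg
    have h2 : -(θ * z * U) * (β * dmin * S - β * lam1 * (S * S) - δ * S)
        = (θ * z * δ + θ * z * β * lam1 * S - θ * z * β * dmin) * (U * S) := by ring
    rw [h2, hUS, mul_one] at h1
    linarith
  have hterm2 : (θ * (θ + 1) / 2) * z * (U * U) * G ≤ z * θ * (1 + θ) * M ^ 2 * lam1 ^ 2 / 32 := by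
    have hpos : 0 ≤ (θ * (θ + 1) / 2) * z * (U * U) := by positivity
    have h1 : (θ * (θ + 1) / 2) * z * (U * U) * G
        ≤ (θ * (θ + 1) / 2) * z * (U * U) * (M ^ 2 / 16 * (lam1 ^ 2 * (S * S))) :=
      mul_le_mul_of_nonneg_left hG_ub hpos
    have h2 : (θ * (θ + 1) / 2) * z * (U * U) * (M ^ 2 / 16 * (lam1 ^ 2 * (S * S)))
        = (z * θ * (1 + θ) * M ^ 2 * lam1 ^ 2 / 32) * ((U * S) * (U * S)) := by ring
    rw [h2, hUS, mul_one, mul_one] at h1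
    linarith
  have key : -θ * z * U * F + (θ * (θ + 1) / 2) * z * (U * U) * G + c
      ≤ S * (-(z * θ * (β * dmin - δ - M ^ 2 / 32 * lam1 ^ 2 * (1 + θ)) - c) * U
          + z * θ * β * lam1) := by
    have hRHS : S * (-(z * θ * (β * dmin - δ - M ^ 2 / 32 * lam1 ^ 2 * (1 + θ)) - c) * U
          + z * θ * β * lam1)
        = (-(z * θ * (β * dmin - δ - M ^ 2 / 32 * lam1 ^ 2 * (1 + θ)) - c)) * (U * S)
          + z * θ * β * lam1 * S := by ring
    rw [hRHS, hUS, mul_one]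
    have hfinal : -(z * θ * (β * dmin - δ - M ^ 2 / 32 * lam1 ^ 2 * (1 + θ)) - c)
          + z * θ * β * lam1 * S
        = (θ * z * δ + θ * z * β * lam1 * S - θ * z * β * dmin)
          + z * θ * (1 + θ) * M ^ 2 * lam1 ^ 2 / 32 + c := by ring
    rw [hfinal]
    linarith
  calc -θ * z * (T * U) * F + (θ * (θ + 1) / 2) * z * (T * (U * U)) * G + c * T
      = T * (-θ * z * U * F + (θ * (θ + 1) / 2) * z * (U * U) * G + c) := by ring
    _ ≤ T * (S * (-(z * θ * (β * dmin - δ - M ^ 2 / 32 * lam1 ^ 2 * (1 + θ)) - c) * U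
          + z * θ * β * lam1)) := mul_le_mul_of_nonneg_left key hT.le
    _ = T * S * (-(z * θ * (β * dmin - δ - M ^ 2 / 32 * lam1 ^ 2 * (1 + θ)) - c) * U
          + z * θ * β * lam1) := by ring
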